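/- (Theorem 4.5) Consider the island Feynman-Kac model on the weighted product spaces (X_n × ℝ₊)^{N1} built from the ESS particle kernels boldM_{n+1}, the potentials boldG_n((x^1,w^1),…,(x^{N1},w^{N1})) = Σ_i w^i G_n(x^i) / Σ_i w^i, and initial distribution (η_0 ⊗ δ_1)^{⊗N1}: its unnormalized measures are boldΓ_n(F) = E[F(ξ_n) ∏_{0≤p<n} boldG_p(ξ_p)] and boldη_n = boldΓ_n / boldΓ_n(1), for the Markov chain (ξ_n) with these transitions and initial law. Then for any bounded measurable f on X_n and the weighted-average lift F((x^1,w^1),…,(x^{N1},w^{N1})) = Σ_i w^i f(x^i) / Σ_i w^i, one has boldΓ_n(F) = γ_n(f) and boldη_n(F) = η_n(f). -/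

import Mathlib

open MeasureTheory ProbabilityTheory Filter Finset
open scoped ENNReal NNReal Topology Classical

noncomputable section

namespace FKisland

/-- Unnormalized Feynman-Kac measures `γ_n`:
`γ_0 = init` and `γ_{n+1}(f) = γ_n (G_n ⋅ step_{n+1} f)`. -/
def gammaSeq {S : ℕ → Type*} [∀ n, MeasurableSpace (S n)]
    (init : Measure (S 0)) (step : ∀ n, S n → Measure (S (n + 1)))
    (G : ∀ n, S n → ℝ) : (n : ℕ) → Measure (S n)
  | 0 => init
  | n + 1 => ((gammaSeq init step G n).withDensity
      (fun x => ENNReal.ofReal (G n x))).bind (step n)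

/-- Normalized Feynman-Kac measures `η_n = γ_n / γ_n(1)`. -/
def etaSeq {S : ℕ → Type*} [∀ n, MeasurableSpace (S n)]
    (init : Measure (S 0)) (step : ∀ n, S n → Measure (S (n + 1)))
    (G : ∀ n, S n → ℝ) (n : ℕ) : Measure (S n) :=
  (gammaSeq init step G n Set.univ)⁻¹ • gammaSeq init step G n

/-- Feynman-Kac semigroup `Q_{p,p+k} = Q_{p+1} Q_{p+2} ⋯ Q_{p+k}` acting on functions,
where `Q_{l+1} g (x) = G_l(x) ∫ g(y) step_l(x,dy)`. -/
def Qop {S : ℕ → Type*} [∀ n, MeasurableSpace (S n)]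
    (step : ∀ n, S n → Measure (S (n + 1))) (G : ∀ n, S n → ℝ) :
    (p k : ℕ) → (S (p + k) → ℝ) → S p → ℝ
  | _, 0, f => f
  | p, k + 1, f => Qop step G p k (fun x => G (p + k) x * ∫ y, f y ∂(step (p + k) x))

/-- `Q_{p,n}` for `p ≤ n`. -/
def Qle {S : ℕ → Type*} [∀ n, MeasurableSpace (S n)]
    (step : ∀ n, S n → Measure (S (n + 1))) (G : ∀ n, S n → ℝ)
    {p n : ℕ} (h : p ≤ n) (f : S n → ℝ) : S p → ℝ :=
  Qop step G p (n - p) (fun y => f (cast (congrArg S (Nat.add_sub_cancel' h)) y))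

/-- Normalized semigroup `Q̄_{p,p+k} = Q_{p,p+k} / η_p(Q_{p,p+k} 1)`. -/
def Qbar {S : ℕ → Type*} [∀ n, MeasurableSpace (S n)]
    (init : Measure (S 0)) (step : ∀ n, S n → Measure (S (n + 1)))
    (G : ∀ n, S n → ℝ) (p k : ℕ) (f : S (p + k) → ℝ) : S p → ℝ :=
  fun x => Qop step G p k f x /
    ∫ z, Qop step G p k (fun _ => (1 : ℝ)) z ∂(etaSeq init step G p)

/-- Normalized semigroup `Q̄_{p,n}` for `p ≤ n`. -/
def Qbarle {S : ℕ → Type*} [∀ n, MeasurableSpace (S n)]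
    (init : Measure (S 0)) (step : ∀ n, S n → Measure (S (n + 1)))
    (G : ∀ n, S n → ℝ) {p n : ℕ} (h : p ≤ n) (f : S n → ℝ) : S p → ℝ :=
  fun x => Qle step G h f x /
    ∫ z, Qle step G h (fun _ => (1 : ℝ)) z ∂(etaSeq init step G p)

/-- Boltzmann-Gibbs transformation `Ψ(μ)(dx) = G(x) μ(dx) / μ(G)`. -/
def boltzmannGibbs {α : Type*} [MeasurableSpace α] (G : α → ℝ) (μ : Measure α) :
    Measure α :=
  (∫⁻ x, ENNReal.ofReal (G x) ∂μ)⁻¹ • μ.withDensity fun x => ENNReal.ofReal (G x)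

/-- One bootstrap selection/mutation step (`boldM_{n+1}`): each of the `N` new particles is
drawn independently from the mixture `Σ_j G(x^j) M(x^j, ⋅) / Σ_k G(x^k)`. -/
def bootStep {α β : Type*} [MeasurableSpace α] [MeasurableSpace β]
    (M : α → Measure β) (G : α → ℝ) {N : ℕ} (x : Fin N → α) :
    Measure (Fin N → β) :=
  Measure.pi fun _ : Fin N =>
    (∑ k, ENNReal.ofReal (G (x k)))⁻¹ • ∑ j, ENNReal.ofReal (G (x j)) • M (x j)

/-- ε-bootstrap selection kernel
`S_{n,μ}(x, ⋅) = ε G(x) δ_x + (1 - ε G(x)) Ψ(μ)`. -/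
def epsSelect {α : Type*} [MeasurableSpace α]
    (G : α → ℝ) (ε : ℝ) (μ : Measure α) (x : α) : Measure α :=
  ENNReal.ofReal (ε * G x) • Measure.dirac x
    + ENNReal.ofReal (1 - ε * G x) • boltzmannGibbs G μ

/-- Empirical measure of a configuration. -/
def empMeasure {α : Type*} [MeasurableSpace α] {N : ℕ} (x : Fin N → α) : Measure α :=
  (N : ℝ≥0∞)⁻¹ • ∑ i, Measure.dirac (x i)

/-- One ε-bootstrap particle step: coordinate `i` moves with `S_{n, m(x)} M` started at `x^i`. -/
def epsBootStep {α β : Type*} [MeasurableSpace α] [MeasurableSpace β]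
    (M : α → Measure β) (G : α → ℝ) (ε : ℝ) {N : ℕ} (x : Fin N → α) :
    Measure (Fin N → β) :=
  Measure.pi fun i : Fin N => (epsSelect G ε (empMeasure x) (x i)).bind M

/-- One ESS particle step on weighted configurations: if the effective sample size
`(Σ w G)² / Σ (wG)²` is at least `a N`, keep the particles (mutating them) and multiply the
weights by the potential; otherwise resample multinomially and reset all weights to 1. -/
def essStep {α β : Type*} [MeasurableSpace α] [MeasurableSpace β]
    (M : α → Measure β) (G : α → ℝ) (a : ℝ) {N : ℕ} (xw : Fin N → α × ℝ) :
    Measure (Fin N → β × ℝ) :=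
  if (∑ i, (xw i).2 * G (xw i).1) ^ 2 / (∑ i, ((xw i).2 * G (xw i).1) ^ 2) ≥ a * N then
    Measure.pi fun i : Fin N => (M (xw i).1).map fun y => (y, (xw i).2 * G (xw i).1)
  else
    Measure.pi fun _ : Fin N =>
      ((∑ k, ENNReal.ofReal ((xw k).2 * G (xw k).1))⁻¹ •
          ∑ j, ENNReal.ofReal ((xw j).2 * G (xw j).1) • M (xw j).1).map
        fun y => (y, (1 : ℝ))

/-- The process `ξ` on the time-varying state spaces `S n` is a Markov chain with initial
law `init` and transition steps `step`, characterized through products of bounded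
measurable functionals of the path. -/
def IsMarkovApprox {Ω : Type*} [MeasurableSpace Ω] (P : Measure Ω)
    {S : ℕ → Type*} [∀ n, MeasurableSpace (S n)]
    (init : Measure (S 0)) (step : ∀ n, S n → Measure (S (n + 1)))
    (ξ : ∀ n, Ω → S n) : Prop :=
  (∀ n, Measurable (ξ n)) ∧
  P.map (ξ 0) = init ∧
  ∀ (n : ℕ) (F : ∀ p, S p → ℝ),
    (∀ p, Measurable (F p)) → (∀ p, ∃ C, ∀ x, |F p x| ≤ C) →
    ∀ (H : S (n + 1) → ℝ), Measurable H → (∃ C, ∀ x, |H x| ≤ C) →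
      ∫ ω, (∏ p ∈ Finset.range (n + 1), F p (ξ p ω)) * H (ξ (n + 1) ω) ∂P
        = ∫ ω, (∏ p ∈ Finset.range (n + 1), F p (ξ p ω)) *
            ∫ y, H y ∂(step n (ξ n ω)) ∂P

/-- Bootstrap local sampling errors `W_p^{N1}` along a configuration path `ξ`:
`W_0^{N1}(g) = √N1 (η_0^{N1}(g) - η_0(g))` and for `p ≥ 1`,
`W_p^{N1}(g) = √N1 (η_p^{N1}(g) - Φ_p(η_{p-1}^{N1})(g))` with `Φ_p(μ) = Ψ_{p-1}(μ) M_p`. -/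
def localW {X : ℕ → Type*} [∀ n, MeasurableSpace (X n)]
    (η0 : Measure (X 0)) (M : ∀ n, Kernel (X n) (X (n + 1))) (G : ∀ n, X n → ℝ)
    (N1 : ℕ) (ξ : ∀ p, Fin N1 → X p) : (p : ℕ) → (X p → ℝ) → ℝ
  | 0, g => Real.sqrt N1 * (((N1 : ℝ)⁻¹ * ∑ i, g (ξ 0 i)) - ∫ x, g x ∂η0)
  | p + 1, g => Real.sqrt N1 * (((N1 : ℝ)⁻¹ * ∑ i, g (ξ (p + 1) i))
      - (∑ i, G p (ξ p i) * ∫ y, g y ∂(M p (ξ p i))) / ∑ i, G p (ξ p i))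

end FKisland

namespace FKaux

variable {α β : Type*} [MeasurableSpace α] [MeasurableSpace β]

lemma integrable_of_bdd {μ : Measure α} [IsFiniteMeasure μ] {f : α → ℝ} (hf : Measurable f)
    {C : ℝ} (hC : ∀ x, |f x| ≤ C) : Integrable f μ :=
  Integrable.mono' (integrable_const C) hf.aestronglyMeasurable
    (Filter.Eventually.of_forall fun x => by simpa [Real.norm_eq_abs] using hC x)

lemma pi_map_eval {N : ℕ} (μ : Fin N → Measure α) [∀ i, IsProbabilityMeasure (μ i)]
    (i : Fin N) : (Measure.pi μ).map (fun y => y i) = μ i := by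
  ext s hs
  rw [Measure.map_apply (measurable_pi_apply i) hs]
  have : (fun y : Fin N → α => y i) ⁻¹' s
      = Set.pi Set.univ (Function.update (fun _ : Fin N => (Set.univ : Set α)) i s) := by
    ext y
    simp only [Set.mem_preimage, Set.mem_univ_pi, Function.update_apply]
    constructor
    · intro hy j; by_cases hj : j = i
      · subst hj; simp [hy]
      · simp [hj]
    · intro hy; have := hy i; simpa using this
  rw [this, Measure.pi_pi]
  rw [Finset.prod_eq_single i (fun j _ hj => by simp [Function.update_of_ne hj])
    (fun h => absurd (Finset.mem_univ i) h)]
  simp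

lemma integral_eval_pi {N : ℕ} (μ : Fin N → Measure α) [∀ i, IsProbabilityMeasure (μ i)]
    (i : Fin N) {φ : α → ℝ} (hφ : Measurable φ) :
    ∫ y, φ (y i) ∂(Measure.pi μ) = ∫ z, φ z ∂(μ i) := by
  rw [← pi_map_eval μ i, integral_map (measurable_pi_apply i).aemeasurable]
  rw [pi_map_eval μ i]
  exact hφ.aestronglyMeasurable

lemma bind_eq_map_snd (μ : Measure α) [SFinite μ] (κ : Kernel α β) [IsSFiniteKernel κ] :
    μ.bind (κ ·) = (μ ⊗ₘ κ).map Prod.snd := by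
  ext s hs
  rw [Measure.bind_apply hs κ.measurable.aemeasurable, Measure.map_apply measurable_snd hs,
    Measure.compProd_apply (measurable_snd hs)]
  rfl

lemma integral_bind_of_bdd (μ : Measure α) [IsFiniteMeasure μ] (κ : Kernel α β)
    [IsMarkovKernel κ] {f : β → ℝ} (hf : Measurable f) {C : ℝ} (hC : ∀ y, |f y| ≤ C) :
    ∫ y, f y ∂(μ.bind (κ ·)) = ∫ x, ∫ y, f y ∂(κ x) ∂μ := by
  rw [bind_eq_map_snd μ κ]
  rw [integral_map measurable_snd.aemeasurable hf.aestronglyMeasurable]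
  exact Measure.integral_compProd (integrable_of_bdd (hf.comp measurable_snd)
    (fun z => hC z.2))

lemma measurable_kernel_integral (κ : Kernel α β) [IsSFiniteKernel κ] {f : β → ℝ}
    (hf : Measurable f) : Measurable fun x => ∫ y, f y ∂(κ x) :=
  (StronglyMeasurable.integral_kernel_prod_right'
    ((hf.comp measurable_snd).stronglyMeasurable) (κ := κ)).measurable

lemma abs_kernel_integral_le (κ : Kernel α β) [IsMarkovKernel κ] {f : β → ℝ}
    {C : ℝ} (hC : ∀ y, |f y| ≤ C) (x : α) : |∫ y, f y ∂(κ x)| ≤ C := by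
  have := norm_integral_le_of_norm_le_const (μ := κ x) (f := f) (C := C)
    (Filter.Eventually.of_forall fun y => by simpa [Real.norm_eq_abs] using hC y)
  simpa [Real.norm_eq_abs] using this

end FKaux

namespace FKaux

section Config

variable {γ : Type*} {N : ℕ}

/-- The set of weighted configurations with all weights positive. -/
def good (γ : Type*) (N : ℕ) : Set (Fin N → γ × ℝ) := {c | ∀ i, 0 < (c i).2}

lemma measurableSet_good [MeasurableSpace γ] :
    MeasurableSet (good γ N) := by
  have : good γ N = ⋂ i, {c : Fin N → γ × ℝ | 0 < (c i).2} := by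
    ext c; simp [good]
  rw [this]
  exact MeasurableSet.iInter fun i =>
    measurableSet_lt measurable_const (measurable_snd.comp (measurable_pi_apply i))

/-- The weighted-average lift of a function to configurations. -/
def liftF (f : γ → ℝ) (c : Fin N → γ × ℝ) : ℝ :=
  (∑ i, (c i).2 * f (c i).1) / ∑ i, (c i).2

lemma measurable_liftF [MeasurableSpace γ] {f : γ → ℝ} (hf : Measurable f) :
    Measurable (liftF (N := N) f) := by
  apply Measurable.div
  · exact Finset.measurable_sum _ fun i _ =>
      (measurable_snd.comp (measurable_pi_apply i)).mul
        (hf.comp (measurable_fst.comp (measurable_pi_apply i)))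
  · exact Finset.measurable_sum _ fun i _ => measurable_snd.comp (measurable_pi_apply i)

lemma sum_weights_pos (hN : 0 < N) {c : Fin N → γ × ℝ} (hc : c ∈ good γ N) :
    0 < ∑ i, (c i).2 :=
  Finset.sum_pos (fun i _ => hc i) ⟨⟨0, hN⟩, Finset.mem_univ _⟩

lemma abs_liftF_le (hN : 0 < N) {f : γ → ℝ} {C : ℝ} (hC : ∀ x, |f x| ≤ C)
    {c : Fin N → γ × ℝ} (hc : c ∈ good γ N) : |liftF f c| ≤ C := by
  have hW : 0 < ∑ i, (c i).2 := sum_weights_pos hN hc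
  rw [liftF, abs_div, abs_of_pos hW, div_le_iff₀ hW]
  calc |∑ i, (c i).2 * f (c i).1| ≤ ∑ i, |(c i).2 * f (c i).1| :=
        Finset.abs_sum_le_sum_abs _ _
    _ ≤ ∑ i, (c i).2 * C := by
        refine Finset.sum_le_sum fun i _ => ?_
        rw [abs_mul, abs_of_pos (hc i)]
        exact mul_le_mul_of_nonneg_left (hC _) (hc i).le
    _ = C * ∑ i, (c i).2 := by rw [← Finset.sum_mul]; ring

lemma abs_indicator_liftF_le (hN : 0 < N) {f : γ → ℝ} {C : ℝ} (hC : ∀ x, |f x| ≤ C)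
    (c : Fin N → γ × ℝ) : |(good γ N).indicator (liftF f) c| ≤ max C 0 := by
  by_cases hc : c ∈ good γ N
  · rw [Set.indicator_of_mem hc]
    exact (abs_liftF_le hN hC hc).trans (le_max_left _ _)
  · rw [Set.indicator_of_notMem hc]
    simp

end Config

section Key

variable {α β : Type*} [MeasurableSpace α] [MeasurableSpace β]

/-- The key one-step identity for the ESS particle kernel. -/
lemma essStep_integral (κ : Kernel α β) [IsMarkovKernel κ] {Gn : α → ℝ}
    (hGpos : ∀ x, 0 < Gn x) (a : ℝ) {N : ℕ} (hN : 0 < N) {f : β → ℝ}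
    (hf : Measurable f) {C : ℝ} (hC : ∀ y, |f y| ≤ C)
    {c : Fin N → α × ℝ} (hc : c ∈ good α N) :
    ∫ d, (good β N).indicator (liftF f) d ∂(FKisland.essStep (κ ·) Gn a c)
      = (∑ i, (c i).2 * Gn (c i).1 * ∫ y, f y ∂(κ (c i).1))
          / ∑ i, (c i).2 * Gn (c i).1 := by
  have hwG : ∀ i, 0 < (c i).2 * Gn (c i).1 := fun i => mul_pos (hc i) (hGpos _)
  have hS : 0 < ∑ i, (c i).2 * Gn (c i).1 :=
    Finset.sum_pos (fun i _ => hwG i) ⟨⟨0, hN⟩, Finset.mem_univ _⟩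
  have hHmeas : Measurable ((good β N).indicator (liftF f)) :=
    (measurable_liftF hf).indicator measurableSet_good
  rw [FKisland.essStep]
  split_ifs with hcond
  · -- keep branch
    haveI : ∀ i, IsProbabilityMeasure
        ((κ (c i).1).map fun y => (y, (c i).2 * Gn (c i).1)) := fun i =>
      Measure.isProbabilityMeasure_map (measurable_id.prodMk measurable_const).aemeasurable
    have hmp : MeasurePreserving
        (fun (y : Fin N → β) i => ((y i), (c i).2 * Gn (c i).1))
        (Measure.pi fun i => κ (c i).1)
        (Measure.pi fun i => (κ (c i).1).map fun y => (y, (c i).2 * Gn (c i).1)) :=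
      measurePreserving_pi _ _ fun i => ⟨measurable_id.prodMk measurable_const, rfl⟩
    rw [← hmp.map_eq, integral_map hmp.measurable.aemeasurable hHmeas.aestronglyMeasurable]
    have heq : ∀ y : Fin N → β,
        (good β N).indicator (liftF f) (fun i => (y i, (c i).2 * Gn (c i).1))
          = (∑ i, (c i).2 * Gn (c i).1 * f (y i)) / ∑ i, (c i).2 * Gn (c i).1 := by
      intro y
      rw [Set.indicator_of_mem
        (show (fun i => (y i, (c i).2 * Gn (c i).1)) ∈ good β N from fun i => hwG i)]
      rfl
    simp only [heq]
    rw [integral_div, integral_finset_sum (μ := Measure.pi fun i => κ (c i).1)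
      (f := fun i (y : Fin N → β) => (c i).2 * Gn (c i).1 * f (y i)) _ (fun i _ =>
      (integrable_of_bdd (hf.comp (measurable_pi_apply i)) (fun y => hC _)).const_mul _)]
    congr 1
    refine Finset.sum_congr rfl fun i _ => ?_
    rw [integral_const_mul, integral_eval_pi _ i hf]
  · -- resample branch
    set T : ℝ≥0∞ := ∑ k, ENNReal.ofReal ((c k).2 * Gn (c k).1) with hT
    have hTS : T = ENNReal.ofReal (∑ k, (c k).2 * Gn (c k).1) :=
      (ENNReal.ofReal_sum_of_nonneg (fun i _ => (hwG i).le)).symm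
    have hTne : T ≠ 0 := by
      rw [hTS]; exact (ENNReal.ofReal_pos.mpr hS).ne'
    have hTtop : T ≠ ⊤ := by rw [hTS]; exact ENNReal.ofReal_ne_top
    set ν : Measure β := T⁻¹ • ∑ j, ENNReal.ofReal ((c j).2 * Gn (c j).1) • κ (c j).1
      with hν
    haveI hνprob : IsProbabilityMeasure ν := by
      constructor
      rw [hν, Measure.smul_apply, Measure.finset_sum_apply]
      simp only [Measure.smul_apply, measure_univ, smul_eq_mul, mul_one]
      rw [← hT]
      exact ENNReal.inv_mul_cancel hTne hTtop
    have hfν : ∫ z, f z ∂ν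
        = (∑ i, (c i).2 * Gn (c i).1 * ∫ y, f y ∂(κ (c i).1))
            / ∑ i, (c i).2 * Gn (c i).1 := by
      rw [hν, integral_smul_measure, integral_finset_sum_measure (fun j _ =>
        (integrable_of_bdd hf hC).smul_measure ENNReal.ofReal_ne_top)]
      have : ∀ j : Fin N, ∫ z, f z ∂(ENNReal.ofReal ((c j).2 * Gn (c j).1) • κ (c j).1)
          = (c j).2 * Gn (c j).1 * ∫ y, f y ∂(κ (c j).1) := fun j => by
        rw [integral_smul_measure, ENNReal.toReal_ofReal (hwG j).le, smul_eq_mul]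
      simp only [this]
      rw [hTS, ← ENNReal.ofReal_inv_of_pos hS, ENNReal.toReal_ofReal (inv_nonneg.mpr hS.le),
        smul_eq_mul, div_eq_inv_mul]
    haveI : IsProbabilityMeasure (ν.map fun y => (y, (1:ℝ))) :=
      Measure.isProbabilityMeasure_map (measurable_id.prodMk measurable_const).aemeasurable
    have hmp : MeasurePreserving (fun (y : Fin N → β) (_i : Fin N) => ((y _i), (1:ℝ)))
        (Measure.pi fun _ => ν)
        (Measure.pi fun _ : Fin N => ν.map fun y => (y, (1:ℝ))) :=
      measurePreserving_pi _ _ fun i => ⟨measurable_id.prodMk measurable_const, rfl⟩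
    rw [← hmp.map_eq, integral_map hmp.measurable.aemeasurable hHmeas.aestronglyMeasurable]
    have heq : ∀ y : Fin N → β,
        (good β N).indicator (liftF f) (fun i => (y i, (1:ℝ)))
          = (∑ i, f (y i)) / (N : ℝ) := by
      intro y
      rw [Set.indicator_of_mem
        (show (fun i => (y i, (1:ℝ))) ∈ good β N from fun i => one_pos)]
      show (∑ i, (1:ℝ) * f (y i)) / ∑ i : Fin N, (1:ℝ) = _
      simp
    simp only [heq]
    rw [integral_div, integral_finset_sum (μ := Measure.pi fun _ => ν)
      (f := fun i (y : Fin N → β) => f (y i)) _ (fun i _ =>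
      integrable_of_bdd (hf.comp (measurable_pi_apply i)) (fun y => hC _))]
    have : ∀ i : Fin N, ∫ y : Fin N → β, f (y i) ∂(Measure.pi fun _ => ν)
        = ∫ z, f z ∂ν := fun i => integral_eval_pi _ i hf
    simp only [this, Finset.sum_const, Finset.card_univ, Fintype.card_fin, nsmul_eq_mul]
    rw [hfν, mul_div_cancel_left₀ _ (Nat.cast_ne_zero.mpr hN.ne' : (N:ℝ) ≠ 0)]

end Key

section Key2

variable {α β : Type*} [MeasurableSpace α] [MeasurableSpace β]

lemma essStep_indicator_one (κ : Kernel α β) [IsMarkovKernel κ] {Gn : α → ℝ}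
    (hGpos : ∀ x, 0 < Gn x) (a : ℝ) {N : ℕ} (hN : 0 < N)
    {c : Fin N → α × ℝ} (hc : c ∈ good α N) :
    ∫ d, (good β N).indicator (fun _ => (1:ℝ)) d ∂(FKisland.essStep (κ ·) Gn a c) = 1 := by
  have h1 : ((good β N).indicator (liftF fun _ => (1:ℝ)) : (Fin N → β × ℝ) → ℝ)
      = (good β N).indicator fun _ => (1:ℝ) := by
    funext d
    by_cases hd : d ∈ good β N
    · rw [Set.indicator_of_mem hd, Set.indicator_of_mem hd, liftF]
      simp only [mul_one]
      exact div_self (sum_weights_pos hN hd).ne'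
    · rw [Set.indicator_of_notMem hd, Set.indicator_of_notMem hd]
  rw [← h1, essStep_integral κ hGpos a hN measurable_const (C := 1)
    (fun y => by norm_num) hc]
  have h2 : ∀ i : Fin N, ∫ _, (1:ℝ) ∂(κ (c i).1) = 1 := fun i => by simp
  simp only [h2, mul_one]
  exact div_self (Finset.sum_pos (fun i _ => mul_pos (hc i) (hGpos _))
    ⟨⟨0, hN⟩, Finset.mem_univ _⟩).ne'

lemma essStep_boldG_integral (κ : Kernel α β) [IsMarkovKernel κ] {Gn : α → ℝ}
    (hGpos : ∀ x, 0 < Gn x) (a : ℝ) {N : ℕ} (hN : 0 < N) {f : β → ℝ}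
    (hf : Measurable f) {C : ℝ} (hC : ∀ y, |f y| ≤ C)
    {c : Fin N → α × ℝ} (hc : c ∈ good α N) :
    liftF Gn c * ∫ d, (good β N).indicator (liftF f) d ∂(FKisland.essStep (κ ·) Gn a c)
      = liftF (fun x => Gn x * ∫ y, f y ∂(κ x)) c := by
  rw [essStep_integral κ hGpos a hN hf hC hc]
  have hS : (0:ℝ) < ∑ i, (c i).2 * Gn (c i).1 :=
    Finset.sum_pos (fun i _ => mul_pos (hc i) (hGpos _)) ⟨⟨0, hN⟩, Finset.mem_univ _⟩
  have hnum : ∑ i, (c i).2 * (Gn (c i).1 * ∫ y, f y ∂(κ (c i).1))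
      = ∑ i, (c i).2 * Gn (c i).1 * ∫ y, f y ∂(κ (c i).1) := by
    simp [mul_assoc]
  rw [liftF, liftF, hnum, div_mul_div_comm, mul_comm (∑ i, (c i).2) _,
    mul_div_mul_left _ _ hS.ne']

end Key2

section Gamma

variable {X : ℕ → Type*} [∀ n, MeasurableSpace (X n)]
  (η0 : Measure (X 0)) [IsProbabilityMeasure η0]
  (M : ∀ n, Kernel (X n) (X (n + 1))) [∀ n, IsMarkovKernel (M n)]
  (G : ∀ n, X n → ℝ)

lemma gammaFinite (hGbdd : ∀ n, ∃ C, ∀ x, G n x ≤ C) :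
    ∀ n, IsFiniteMeasure (FKisland.gammaSeq (S := X) η0 (fun k x => M k x) G n) := by
  intro n
  induction n with
  | zero => exact inferInstanceAs (IsFiniteMeasure η0)
  | succ n ih =>
    constructor
    have heq : FKisland.gammaSeq (S := X) η0 (fun k x => M k x) G (n+1)
        = ((FKisland.gammaSeq (S := X) η0 (fun k x => M k x) G n).withDensity
            (fun x => ENNReal.ofReal (G n x))).bind (fun x => M n x) := rfl
    rw [heq, Measure.bind_apply MeasurableSet.univ (M n).measurable.aemeasurable]
    obtain ⟨C, hC⟩ := hGbdd n
    calc ∫⁻ x, (M n) x Set.univ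
          ∂((FKisland.gammaSeq (S := X) η0 (fun k x => M k x) G n).withDensity
              (fun x => ENNReal.ofReal (G n x)))
        = ∫⁻ _, 1
          ∂((FKisland.gammaSeq (S := X) η0 (fun k x => M k x) G n).withDensity
              (fun x => ENNReal.ofReal (G n x))) := by simp
      _ = ((FKisland.gammaSeq (S := X) η0 (fun k x => M k x) G n).withDensity
              (fun x => ENNReal.ofReal (G n x))) Set.univ := lintegral_one
      _ = ∫⁻ x, ENNReal.ofReal (G n x)
            ∂(FKisland.gammaSeq (S := X) η0 (fun k x => M k x) G n) := by
          rw [withDensity_apply _ MeasurableSet.univ, setLIntegral_univ]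
      _ ≤ ∫⁻ _, ENNReal.ofReal C
            ∂(FKisland.gammaSeq (S := X) η0 (fun k x => M k x) G n) :=
          lintegral_mono fun x => ENNReal.ofReal_le_ofReal (hC x)
      _ = ENNReal.ofReal C
            * (FKisland.gammaSeq (S := X) η0 (fun k x => M k x) G n) Set.univ :=
          lintegral_const _
      _ < ⊤ := ENNReal.mul_lt_top ENNReal.ofReal_lt_top ih.measure_univ_lt_top

lemma gamma_succ (hGmeas : ∀ n, Measurable (G n)) (hGbdd : ∀ n, ∃ C, ∀ x, G n x ≤ C)
    (hGpos : ∀ n x, 0 < G n x) (n : ℕ) {f : X (n+1) → ℝ} (hf : Measurable f)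
    {C : ℝ} (hC : ∀ y, |f y| ≤ C) :
    ∫ y, f y ∂(FKisland.gammaSeq (S := X) η0 (fun k x => M k x) G (n+1))
      = ∫ x, G n x * ∫ y, f y ∂(M n x)
          ∂(FKisland.gammaSeq (S := X) η0 (fun k x => M k x) G n) := by
  haveI := gammaFinite η0 M G hGbdd n
  haveI : IsFiniteMeasure
      ((FKisland.gammaSeq (S := X) η0 (fun k x => M k x) G n).withDensity
        (fun x => ENNReal.ofReal (G n x))) := by
    constructor
    obtain ⟨C', hC'⟩ := hGbdd n
    rw [withDensity_apply _ MeasurableSet.univ, setLIntegral_univ]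
    calc ∫⁻ x, ENNReal.ofReal (G n x)
          ∂(FKisland.gammaSeq (S := X) η0 (fun k x => M k x) G n)
        ≤ ∫⁻ _, ENNReal.ofReal C'
          ∂(FKisland.gammaSeq (S := X) η0 (fun k x => M k x) G n) :=
        lintegral_mono fun x => ENNReal.ofReal_le_ofReal (hC' x)
      _ = ENNReal.ofReal C'
            * (FKisland.gammaSeq (S := X) η0 (fun k x => M k x) G n) Set.univ :=
        lintegral_const _
      _ < ⊤ := ENNReal.mul_lt_top ENNReal.ofReal_lt_top
          (gammaFinite η0 M G hGbdd n).measure_univ_lt_top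
  have heq : FKisland.gammaSeq (S := X) η0 (fun k x => M k x) G (n+1)
      = ((FKisland.gammaSeq (S := X) η0 (fun k x => M k x) G n).withDensity
          (fun x => ENNReal.ofReal (G n x))).bind (fun x => M n x) := rfl
  rw [heq, integral_bind_of_bdd _ (M n) hf hC]
  have hd : (fun x => ENNReal.ofReal (G n x))
      = fun x => (((G n x).toNNReal : ℝ≥0) : ℝ≥0∞) := by
    funext x; simp [ENNReal.ofReal]
  rw [hd, integral_withDensity_eq_integral_smul ((hGmeas n).real_toNNReal) _]
  refine integral_congr_ae (Filter.Eventually.of_forall fun x => ?_)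
  show (G n x).toNNReal • (∫ y, f y ∂(M n x)) = G n x * ∫ y, f y ∂(M n x)
  rw [NNReal.smul_def, Real.coe_toNNReal _ (hGpos n x).le, smul_eq_mul]

end Gamma

section Chain

variable {X : ℕ → Type*} [∀ n, MeasurableSpace (X n)]
  (η0 : Measure (X 0)) [IsProbabilityMeasure η0]
  (M : ∀ n, Kernel (X n) (X (n + 1))) [∀ n, IsMarkovKernel (M n)]
  (G : ∀ n, X n → ℝ)
  {Ω : Type*} [MeasurableSpace Ω] (P : Measure Ω) [IsProbabilityMeasure P]
  {N1 : ℕ} (ξ : ∀ p, Ω → (Fin N1 → X p × ℝ)) (a : ℝ)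

lemma ae_mem_of_prob_preimage_eq_one {γ : Type*} [MeasurableSpace γ] {g : Ω → γ}
    (hg : Measurable g) {s : Set γ} (hs : MeasurableSet s) (h : P (g ⁻¹' s) = 1) :
    ∀ᵐ ω ∂P, g ω ∈ s := by
  rw [ae_iff]
  have heq : {ω | ¬ g ω ∈ s} = (g ⁻¹' s)ᶜ := rfl
  rw [heq, prob_compl_eq_one_sub (hg hs), h, tsub_self]

lemma good_all
    (hGpos : ∀ n x, 0 < G n x) (hN1 : 0 < N1)
    (hchain : FKisland.IsMarkovApprox (S := fun p => Fin N1 → X p × ℝ) P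
      (Measure.pi fun _ : Fin N1 => η0.map fun x0 => (x0, (1 : ℝ)))
      (fun k x => FKisland.essStep (fun c => M k c) (G k) a x) ξ) :
    ∀ n, ∀ᵐ ω ∂P, ξ n ω ∈ good (X n) N1 := by
  intro n
  induction n with
  | zero =>
    refine ae_mem_of_prob_preimage_eq_one P (hchain.1 0) measurableSet_good ?_
    rw [← Measure.map_apply (hchain.1 0) (measurableSet_good (γ := X 0) (N := N1)), hchain.2.1]
    have hgood : good (X 0) N1
        = Set.pi Set.univ (fun _ : Fin N1 => {p : X 0 × ℝ | 0 < p.2}) := by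
      ext c; simp [good, Set.mem_univ_pi]
    rw [hgood, Measure.pi_pi]
    have h1 : (η0.map fun x0 => (x0, (1:ℝ))) {p : X 0 × ℝ | 0 < p.2} = 1 := by
      rw [Measure.map_apply
        (show Measurable fun x0 : X 0 => (x0, (1:ℝ)) from
          measurable_id.prodMk measurable_const)
        (measurableSet_lt measurable_const measurable_snd)]
      have : ((fun x0 : X 0 => (x0, (1:ℝ))) ⁻¹' {p : X 0 × ℝ | 0 < p.2})
          = Set.univ := by ext x; simp
      rw [this]; exact measure_univ
    simp [h1]
  | succ n ih =>
    have hM := hchain.2.2 n (fun _ _ => (1:ℝ)) (fun _ => measurable_const)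
      (fun _ => ⟨1, fun _ => by norm_num⟩)
      ((good (X (n+1)) N1).indicator fun _ => (1:ℝ))
      (measurable_const.indicator measurableSet_good)
      ⟨1, fun x => by
        by_cases h : x ∈ good (X (n+1)) N1 <;>
          simp [Set.indicator_of_mem, Set.indicator_of_notMem, h]⟩
    simp only [Finset.prod_const_one, one_mul] at hM
    have hRHS : ∫ ω, ∫ y, (good (X (n+1)) N1).indicator (fun _ => (1:ℝ)) y
        ∂(FKisland.essStep (fun c => M n c) (G n) a (ξ n ω)) ∂P = 1 := by
      have hcong : (fun ω => ∫ y, (good (X (n+1)) N1).indicator (fun _ => (1:ℝ)) y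
          ∂(FKisland.essStep (fun c => M n c) (G n) a (ξ n ω)))
            =ᵐ[P] fun _ => (1:ℝ) := by
        filter_upwards [ih] with ω hω
        exact essStep_indicator_one (M n) (hGpos n) a hN1 hω
      rw [integral_congr_ae hcong]
      simp
    have hLHS : ∫ ω, (good (X (n+1)) N1).indicator (fun _ => (1:ℝ)) (ξ (n+1) ω) ∂P
        = (P (ξ (n+1) ⁻¹' good (X (n+1)) N1)).toReal := by
      have hcomp : (fun ω => (good (X (n+1)) N1).indicator (fun _ => (1:ℝ)) (ξ (n+1) ω))
          = (ξ (n+1) ⁻¹' good (X (n+1)) N1).indicator (fun _ => (1:ℝ)) := by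
        funext ω
        by_cases h : ξ (n+1) ω ∈ good (X (n+1)) N1
        · rw [Set.indicator_of_mem h, Set.indicator_of_mem
            (show ω ∈ ξ (n+1) ⁻¹' good (X (n+1)) N1 from h)]
        · rw [Set.indicator_of_notMem h, Set.indicator_of_notMem
            (show ω ∉ ξ (n+1) ⁻¹' good (X (n+1)) N1 from h)]
      rw [hcomp, integral_indicator (hchain.1 (n+1) measurableSet_good)]
      simp [Measure.real]
    refine ae_mem_of_prob_preimage_eq_one P (hchain.1 (n+1)) measurableSet_good ?_
    rw [← ENNReal.toReal_eq_one_iff, ← hLHS, hM, hRHS]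

lemma unbiased
    (hGmeas : ∀ n, Measurable (G n)) (hGbdd : ∀ n, ∃ C, ∀ x, G n x ≤ C)
    (hGpos : ∀ n x, 0 < G n x) (hN1 : 0 < N1)
    (hchain : FKisland.IsMarkovApprox (S := fun p => Fin N1 → X p × ℝ) P
      (Measure.pi fun _ : Fin N1 => η0.map fun x0 => (x0, (1 : ℝ)))
      (fun k x => FKisland.essStep (fun c => M k c) (G k) a x) ξ) :
    ∀ n (f : X n → ℝ), Measurable f → (∃ C, ∀ x, |f x| ≤ C) →
      ∫ ω, liftF f (ξ n ω) * ∏ p ∈ Finset.range n, liftF (G p) (ξ p ω) ∂P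
        = ∫ x, f x ∂(FKisland.gammaSeq (S := X) η0 (fun k x => M k x) G n) := by
  have hgood := good_all η0 M G P ξ a hGpos hN1 hchain
  have haeAll : ∀ᵐ ω ∂P, ∀ p, ξ p ω ∈ good (X p) N1 := ae_all_iff.mpr hgood
  intro n
  induction n with
  | zero =>
    intro f hf hfb
    obtain ⟨C, hC⟩ := hfb
    simp only [Finset.range_zero, Finset.prod_empty, mul_one]
    -- almost surely, all initial weights are 1
    have hsone : MeasurableSet {c : Fin N1 → X 0 × ℝ | ∀ i, (c i).2 = 1} := by
      have : {c : Fin N1 → X 0 × ℝ | ∀ i, (c i).2 = 1}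
          = ⋂ i, {c : Fin N1 → X 0 × ℝ | (c i).2 = 1} := by ext c; simp
      rw [this]
      exact MeasurableSet.iInter fun i =>
        (measurable_snd.comp (measurable_pi_apply i)) (measurableSet_singleton 1)
    have hwone : ∀ᵐ ω ∂P, ∀ i, (ξ 0 ω i).2 = 1 := by
      refine ae_mem_of_prob_preimage_eq_one P (hchain.1 0) hsone ?_
      rw [← Measure.map_apply (hchain.1 0) hsone, hchain.2.1]
      have hset : {c : Fin N1 → X 0 × ℝ | ∀ i, (c i).2 = 1}
          = Set.pi Set.univ (fun _ : Fin N1 => {p : X 0 × ℝ | p.2 = 1}) := by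
        ext c; simp [Set.mem_univ_pi]
      rw [hset, Measure.pi_pi]
      have h1 : (η0.map fun x0 => (x0, (1:ℝ))) {p : X 0 × ℝ | p.2 = 1} = 1 := by
        show (η0.map fun x0 => (x0, (1:ℝ))) (Prod.snd ⁻¹' {1}) = 1
        rw [Measure.map_apply
          (show Measurable fun x0 : X 0 => (x0, (1:ℝ)) from
            measurable_id.prodMk measurable_const)
          (measurable_snd (measurableSet_singleton 1))]
        have : ((fun x0 : X 0 => (x0, (1:ℝ))) ⁻¹' (Prod.snd ⁻¹' {1}))
            = Set.univ := by ext x; simp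
        rw [this]; exact measure_univ
      simp [h1]
    have hcong : (fun ω => liftF f (ξ 0 ω))
        =ᵐ[P] fun ω => (∑ i, f ((ξ 0 ω i).1)) / (N1:ℝ) := by
      filter_upwards [hwone] with ω hω
      rw [liftF]
      simp [hω]
    rw [integral_congr_ae hcong]
    have hmeas2 : Measurable fun c : Fin N1 → X 0 × ℝ => (∑ i, f ((c i).1)) / (N1:ℝ) :=
      (Finset.measurable_sum _ fun i _ =>
        hf.comp (measurable_fst.comp (measurable_pi_apply i))).div measurable_const
    have hmap : ∫ ω, (∑ i, f ((ξ 0 ω i).1)) / (N1:ℝ) ∂P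
        = ∫ c : Fin N1 → X 0 × ℝ, (∑ i, f ((c i).1)) / (N1:ℝ) ∂(P.map (ξ 0)) :=
      (integral_map (hchain.1 0).aemeasurable hmeas2.aestronglyMeasurable).symm
    rw [hmap, hchain.2.1]
    haveI : IsProbabilityMeasure (η0.map fun x0 => (x0, (1:ℝ))) :=
      Measure.isProbabilityMeasure_map (measurable_id.prodMk measurable_const).aemeasurable
    rw [integral_div, integral_finset_sum
      (μ := Measure.pi fun _ : Fin N1 => η0.map fun x0 => (x0, (1:ℝ)))
      (f := fun i (c : Fin N1 → X 0 × ℝ) => f ((c i).1)) _ (fun i _ =>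
        integrable_of_bdd ((hf.comp measurable_fst).comp (measurable_pi_apply i))
          (fun c => hC _))]
    have heval : ∀ i : Fin N1,
        ∫ c : Fin N1 → X 0 × ℝ, f ((c i).1)
            ∂(Measure.pi fun _ : Fin N1 => η0.map fun x0 => (x0, (1:ℝ)))
          = ∫ x, f x ∂η0 := by
      intro i
      have h1 : ∫ c : Fin N1 → X 0 × ℝ, f ((c i).1)
            ∂(Measure.pi fun _ : Fin N1 => η0.map fun x0 => (x0, (1:ℝ)))
          = ∫ p : X 0 × ℝ, f p.1 ∂(η0.map fun x0 => (x0, (1:ℝ))) :=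
        integral_eval_pi (fun _ : Fin N1 => η0.map fun x0 => (x0, (1:ℝ))) i
          (hf.comp measurable_fst)
      have h2 : ∫ p : X 0 × ℝ, f p.1 ∂(η0.map fun x0 => (x0, (1:ℝ)))
          = ∫ x, f x ∂η0 :=
        integral_map
          (show Measurable fun x0 : X 0 => (x0, (1:ℝ)) from
            measurable_id.prodMk measurable_const).aemeasurable
          (hf.comp measurable_fst).aestronglyMeasurable
      exact h1.trans h2
    simp only [heval, Finset.sum_const, Finset.card_univ, Fintype.card_fin, nsmul_eq_mul]
    rw [mul_div_cancel_left₀ _ (Nat.cast_ne_zero.mpr hN1.ne' : (N1:ℝ) ≠ 0)]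
    rfl
  | succ n ih =>
    intro f hf hfb
    obtain ⟨C, hC⟩ := hfb
    obtain ⟨D, hD⟩ := hGbdd n
    have hgmeas : Measurable fun x => G n x * ∫ y, f y ∂(M n x) :=
      (hGmeas n).mul (measurable_kernel_integral (M n) hf)
    have hgbdd : ∀ x, |G n x * ∫ y, f y ∂(M n x)| ≤ D * C := fun x => by
      rw [abs_mul, abs_of_pos (hGpos n x)]
      exact mul_le_mul (hD x) (abs_kernel_integral_le (M n) hC x) (abs_nonneg _)
        ((hGpos n x).le.trans (hD x))
    have hHmeas : Measurable ((good (X (n+1)) N1).indicator (liftF f)) :=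
      (measurable_liftF hf).indicator measurableSet_good
    have hM := hchain.2.2 n (fun p => (good (X p) N1).indicator (liftF (G p)))
      (fun p => (measurable_liftF (hGmeas p)).indicator measurableSet_good)
      (fun p => by
        obtain ⟨Cp, hCp⟩ := hGbdd p
        exact ⟨max Cp 0, abs_indicator_liftF_le hN1
          (fun x => by rw [abs_of_pos (hGpos p x)]; exact hCp x)⟩)
      ((good (X (n+1)) N1).indicator (liftF f)) hHmeas
      ⟨max C 0, abs_indicator_liftF_le hN1 hC⟩
    have step1 : ∫ ω, liftF f (ξ (n+1) ω)
          * ∏ p ∈ Finset.range (n+1), liftF (G p) (ξ p ω) ∂P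
        = ∫ ω, (∏ p ∈ Finset.range (n+1),
              (good (X p) N1).indicator (liftF (G p)) (ξ p ω))
            * (good (X (n+1)) N1).indicator (liftF f) (ξ (n+1) ω) ∂P := by
      refine integral_congr_ae ?_
      filter_upwards [haeAll] with ω hω
      rw [Set.indicator_of_mem (hω (n+1)),
        Finset.prod_congr rfl (fun p _ => Set.indicator_of_mem (hω p) (liftF (G p)))]
      exact mul_comm _ _
    have step3 : ∫ ω, (∏ p ∈ Finset.range (n+1),
            (good (X p) N1).indicator (liftF (G p)) (ξ p ω))
          * ∫ y, (good (X (n+1)) N1).indicator (liftF f) y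
              ∂(FKisland.essStep (fun c => M n c) (G n) a (ξ n ω)) ∂P
        = ∫ ω, liftF (fun x => G n x * ∫ y, f y ∂(M n x)) (ξ n ω)
            * ∏ p ∈ Finset.range n, liftF (G p) (ξ p ω) ∂P := by
      refine integral_congr_ae ?_
      filter_upwards [haeAll] with ω hω
      rw [Finset.prod_range_succ,
        Finset.prod_congr rfl (fun p _ => Set.indicator_of_mem (hω p) (liftF (G p))),
        Set.indicator_of_mem (hω n), mul_assoc,
        essStep_boldG_integral (M n) (hGpos n) a hN1 hf hC (hω n)]
      exact mul_comm _ _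
    rw [step1, hM, step3, ih _ hgmeas ⟨D * C, hgbdd⟩]
    exact (gamma_succ η0 M G hGmeas hGbdd hGpos n hf hC).symm

end Chain

end FKaux


open FKisland
/-- **Theorem 4.5.** For the island Feynman-Kac model on weighted
configurations built from the ESS particle transitions, the potentials
`boldG_n(x,w) = Σ_i w^i G_n(x^i) / Σ_i w^i` and initial law `(η_0 ⊗ δ_1)^{⊗N1}`, and for
the weighted-average lift `F(x,w) = Σ_i w^i f(x^i) / Σ_i w^i`:
`boldΓ_n(F) = γ_n(f)` and `boldη_n(F) = η_n(f)`. -/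
theorem statement13 {X : ℕ → Type*} [∀ n, MeasurableSpace (X n)]
    (η0 : Measure (X 0)) [IsProbabilityMeasure η0]
    (M : ∀ n, Kernel (X n) (X (n + 1))) [∀ n, IsMarkovKernel (M n)]
    (G : ∀ n, X n → ℝ)
    (hGmeas : ∀ n, Measurable (G n))
    (hGbdd : ∀ n, ∃ C, ∀ x, G n x ≤ C)
    (hGpos : ∀ n x, 0 < G n x)
    (a : ℝ) (ha : a ∈ Set.Ioo (0 : ℝ) 1)
    {Ω : Type*} [MeasurableSpace Ω] (P : Measure Ω) [IsProbabilityMeasure P]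
    {N1 : ℕ} (hN1 : 1 ≤ N1)
    (ξ : ∀ p, Ω → (Fin N1 → X p × ℝ))
    (hchain : IsMarkovApprox (S := fun p => Fin N1 → X p × ℝ) P
      (Measure.pi fun _ : Fin N1 => η0.map fun x0 => (x0, (1 : ℝ)))
      (fun k x => essStep (fun c => M k c) (G k) a x) ξ)
    (n : ℕ) (f : X n → ℝ) (hf : Measurable f) (hfb : ∃ C, ∀ x, |f x| ≤ C) :
    (∫ ω, ((∑ i, (ξ n ω i).2 * f (ξ n ω i).1) / ∑ i, (ξ n ω i).2) *
        ∏ p ∈ Finset.range n,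
          ((∑ i, (ξ p ω i).2 * G p (ξ p ω i).1) / ∑ i, (ξ p ω i).2) ∂P
      = ∫ x, f x ∂(gammaSeq (S := X) η0 (fun k x => M k x) G n))
    ∧ (∫ ω, ((∑ i, (ξ n ω i).2 * f (ξ n ω i).1) / ∑ i, (ξ n ω i).2) *
          ∏ p ∈ Finset.range n,
            ((∑ i, (ξ p ω i).2 * G p (ξ p ω i).1) / ∑ i, (ξ p ω i).2) ∂P) /
        (∫ ω, ∏ p ∈ Finset.range n,
            ((∑ i, (ξ p ω i).2 * G p (ξ p ω i).1) / ∑ i, (ξ p ω i).2) ∂P)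
      = ∫ x, f x ∂(etaSeq (S := X) η0 (fun k x => M k x) G n) := by
  have hN1' : 0 < N1 := hN1
  have hunb := FKaux.unbiased η0 M G P ξ a hGmeas hGbdd hGpos hN1' hchain
  have h1 : ∫ ω, ((∑ i, (ξ n ω i).2 * f (ξ n ω i).1) / ∑ i, (ξ n ω i).2) *
        ∏ p ∈ Finset.range n,
          ((∑ i, (ξ p ω i).2 * G p (ξ p ω i).1) / ∑ i, (ξ p ω i).2) ∂P
      = ∫ x, f x ∂(gammaSeq (S := X) η0 (fun k x => M k x) G n) := hunb n f hf hfb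
  refine ⟨h1, ?_⟩
  have hden : ∫ ω, ∏ p ∈ Finset.range n,
        ((∑ i, (ξ p ω i).2 * G p (ξ p ω i).1) / ∑ i, (ξ p ω i).2) ∂P
      = ((gammaSeq (S := X) η0 (fun k x => M k x) G n) Set.univ).toReal := by
    have hgood := FKaux.good_all η0 M G P ξ a hGpos hN1' hchain
    have hcong : (fun ω => ∏ p ∈ Finset.range n,
          ((∑ i, (ξ p ω i).2 * G p (ξ p ω i).1) / ∑ i, (ξ p ω i).2))
        =ᵐ[P] fun ω => FKaux.liftF (fun _ : X n => (1:ℝ)) (ξ n ω) *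
          ∏ p ∈ Finset.range n, FKaux.liftF (G p) (ξ p ω) := by
      filter_upwards [hgood n] with ω hω
      have hone : FKaux.liftF (fun _ : X n => (1:ℝ)) (ξ n ω) = 1 := by
        rw [FKaux.liftF]
        simp only [mul_one]
        exact div_self (FKaux.sum_weights_pos hN1' hω).ne'
      rw [hone, one_mul]
      rfl
    rw [integral_congr_ae hcong,
      hunb n (fun _ => (1:ℝ)) measurable_const ⟨1, fun _ => by norm_num⟩]
    simp [Measure.real]
  rw [h1, hden]
  have heta : ∫ x, f x ∂(etaSeq (S := X) η0 (fun k x => M k x) G n)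
      = ∫ x, f x ∂(((gammaSeq (S := X) η0 (fun k x => M k x) G n) Set.univ)⁻¹ •
          gammaSeq (S := X) η0 (fun k x => M k x) G n) := rfl
  rw [heta, integral_smul_measure, ENNReal.toReal_inv, smul_eq_mul, div_eq_inv_mul]
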